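/- Let R be a commutative ring, ρ : ℤ^r → ℤ^m a surjective group homomorphism, and f ∈ R[ℤ^r] a Laurent polynomial. For any group homomorphism s : ℤ^m → ℤ^r with ρ ∘ s = id, let φ_s : R[ℤ^r] → (R[ℤ^r])[ℤ^m] be the R-linear map sending the monomial with exponent λ ∈ ℤ^r to the monomial with exponent ρ(λ) ∈ ℤ^m whose coefficient is the monomial with exponent λ − s(ρ(λ)) in R[ℤ^r]. Then the set of points of ℤ^m at which φ_s(f) has nonzero coefficient equals ρ(supp(f)); consequently the Newton polytope of φ_s(f) in ℝ^m equals the convex hull of the image of supp(f) under the ℝ-linear extension of ρ, and in particular it does not depend on the choice of the section s. -/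

import Mathlib

/-- The canonical embedding `ℤ^m → ℝ^m`. -/
noncomputable def latticeEmbed {m : ℕ} (l : Fin m → ℤ) : Fin m → ℝ :=
  fun i => (l i : ℝ)

/-- The Newton polytope of a Laurent polynomial `f ∈ R[ℤ^m]` (here with coefficients in any
commutative ring `S`, e.g. `S = R[ℤ^r]`): the convex hull in `ℝ^m` of the image of its support. -/
noncomputable def newtonPolytope {S : Type*} [CommRing S] {m : ℕ}
    (f : AddMonoidAlgebra S (Fin m → ℤ)) : Set (Fin m → ℝ) :=
  convexHull ℝ (latticeEmbed '' (f.coeff.support : Set (Fin m → ℤ)))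

/-- Given a splitting `s` of the surjection `ρ : ℤ^r → ℤ^m`, the map
`φ_s : R[ℤ^r] → (R[ℤ^r])[ℤ^m]` sending the monomial of exponent `λ` to the monomial of exponent
`ρ(λ)` whose coefficient is the monomial of exponent `λ - s(ρ(λ))`. -/
noncomputable def splitMap {R : Type*} [CommRing R] {r m : ℕ}
    (ρ : (Fin r → ℤ) →+ (Fin m → ℤ)) (s : (Fin m → ℤ) →+ (Fin r → ℤ))
    (f : AddMonoidAlgebra R (Fin r → ℤ)) :
    AddMonoidAlgebra (AddMonoidAlgebra R (Fin r → ℤ)) (Fin m → ℤ) :=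
  f.coeff.sum fun l a => AddMonoidAlgebra.single (ρ l) (AddMonoidAlgebra.single (l - s (ρ l)) a)


lemma splitMap_support {R : Type*} [CommRing R] {r m : ℕ}
    (ρ : (Fin r → ℤ) →+ (Fin m → ℤ))
    (s : (Fin m → ℤ) →+ (Fin r → ℤ))
    (f : AddMonoidAlgebra R (Fin r → ℤ)) :
    ((splitMap ρ s f).coeff.support : Set (Fin m → ℤ)) = ρ '' (f.coeff.support : Set (Fin r → ℤ)) := by
  ext μ
  simp only [Finset.mem_coe, Finsupp.mem_support_iff, Set.mem_image, ne_eq]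
  constructor
  · intro h
    by_contra hc
    push_neg at hc
    apply h
    rw [splitMap, Finsupp.sum, AddMonoidAlgebra.coeff_sum]
    rw [Finsupp.finset_sum_apply]
    apply Finset.sum_eq_zero
    intro l hl
    rw [AddMonoidAlgebra.coeff_single, Finsupp.single_apply, if_neg]
    exact fun he => hc l (Finsupp.mem_support_iff.mp hl) he
  · rintro ⟨l0, hl0, hρ0⟩
    intro h
    have : ((splitMap ρ s f).coeff μ).coeff (l0 - s μ) = f.coeff l0 := by
      rw [splitMap, Finsupp.sum, AddMonoidAlgebra.coeff_sum, Finsupp.finset_sum_apply,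
        AddMonoidAlgebra.coeff_sum, Finsupp.finset_sum_apply]
      rw [Finset.sum_eq_single l0]
      · simp [hρ0]
      · intro l hl hne
        rcases eq_or_ne (ρ l) μ with he | he
        · rw [AddMonoidAlgebra.coeff_single, Finsupp.single_apply, if_pos he, he,
              AddMonoidAlgebra.coeff_single, Finsupp.single_apply, if_neg]
          intro hc
          apply hne
          exact sub_left_injective hc
        · rw [AddMonoidAlgebra.coeff_single, Finsupp.single_apply, if_neg he]; simp
      · intro h'; simp at h'; simp [h']
    rw [h] at this
    simp at this
    exact hl0 this.symm

theorem support_splitMap_and_newtonPolytope_indep {R : Type*} [CommRing R] {r m : ℕ}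
    (ρ : (Fin r → ℤ) →+ (Fin m → ℤ)) (hρ : Function.Surjective ρ)
    (s : (Fin m → ℤ) →+ (Fin r → ℤ)) (hs : ∀ μ, ρ (s μ) = μ)
    (f : AddMonoidAlgebra R (Fin r → ℤ)) :
    ((splitMap ρ s f).coeff.support : Set (Fin m → ℤ)) = ρ '' (f.coeff.support : Set (Fin r → ℤ)) ∧
    newtonPolytope (splitMap ρ s f)
      = convexHull ℝ (latticeEmbed '' (ρ '' (f.coeff.support : Set (Fin r → ℤ)))) ∧
    ∀ s' : (Fin m → ℤ) →+ (Fin r → ℤ), (∀ μ, ρ (s' μ) = μ) →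
      newtonPolytope (splitMap ρ s' f) = newtonPolytope (splitMap ρ s f) := by
  refine ⟨splitMap_support ρ s f, ?_, ?_⟩
  · rw [newtonPolytope, splitMap_support ρ s f]
  · intro s' hs'
    rw [newtonPolytope, newtonPolytope, splitMap_support ρ s f, splitMap_support ρ s' f]
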